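/- In a directed graph D=(V,A), for a subset U ⊆ V there exists a branching B ⊆ A with R(B)=U (vertices with no entering arc of B) if and only if U intersects every source component of D (a strong component with no entering arc). -/

import Mathlib

open scoped Classical
open Finset

variable {V : Type*} [Fintype V] [DecidableEq V]

/-- A closed directed walk (cycle) using arcs of `B`. -/
def HasCycle (B : Finset (V × V)) : Prop :=
  ∃ (n : ℕ) (f : Fin (n + 1) → V), ∀ i : Fin (n + 1), (f i, f (i + 1)) ∈ B

/-- `B` is a branching in the digraph with arc set `A`: a subset of `A`,
in-degree at most one at each vertex, and no directed cycle. -/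
def IsBranching (A B : Finset (V × V)) : Prop :=
  B ⊆ A ∧ (∀ v : V, (B.filter (fun a => a.2 = v)).card ≤ 1) ∧ ¬ HasCycle B

/-- `R(B)`: the set of vertices with no arc of `B` entering them. -/
def rootSet (B : Finset (V × V)) : Finset V :=
  Finset.univ.filter (fun v => ∀ a ∈ B, a.2 ≠ v)

/-- Reachability via directed paths using arcs of `A`. -/
def Reaches (A : Finset (V × V)) (u v : V) : Prop :=
  Relation.ReflTransGen (fun x y => (x, y) ∈ A) u v

/-- A source component: a strongly connected component with no entering arc. -/
def IsSourceComponent (A : Finset (V × V)) (K : Set V) : Prop :=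
  (∃ v : V, K = {u : V | Reaches A u v ∧ Reaches A v u}) ∧
    ∀ a ∈ A, a.2 ∈ K → a.1 ∈ K

/-- An infinite backward chain in a finite graph yields a cycle. -/
lemma cycle_of_backchain {B : Finset (V × V)} {h : ℕ → V}
    (hh : ∀ k, (h (k + 1), h k) ∈ B) {i j : ℕ} (hlt : i < j) (heq : h i = h j) :
    HasCycle B := by
  refine ⟨j - i - 1, fun t => h (j - t.val), fun t => ?_⟩
  show (h (j - t.val), h (j - ((t + 1) : Fin _).val)) ∈ B
  by_cases ht : t = Fin.last (j - i - 1)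
  · have h1 : ((t + 1) : Fin _).val = 0 := by rw [Fin.val_add_one, if_pos ht]
    have h2 : t.val = j - i - 1 := by rw [ht]; rfl
    rw [h1, h2, Nat.sub_zero]
    have e1 : j - (j - i - 1) = i + 1 := by omega
    rw [e1, ← heq]
    exact hh i
  · have h1 : ((t + 1) : Fin _).val = t.val + 1 := by rw [Fin.val_add_one, if_neg ht]
    have h2 : t.val < j - i - 1 := by
      have := Fin.is_le t
      have : t.val ≠ j - i - 1 := fun hc => ht (Fin.eq_of_val_eq (by simpa using hc))
      omega
    have e1 : j - t.val = (j - (t.val + 1)) + 1 := by omega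
    rw [h1, e1]
    exact hh _

/-- BFS layers from `U`. -/
def layer (A : Finset (V × V)) (U : Finset V) : ℕ → Finset V
  | 0 => U
  | n + 1 => layer A U n ∪ Finset.univ.filter (fun v => ∃ u ∈ layer A U n, (u, v) ∈ A)

lemma mem_layer_of_reaches {A : Finset (V × V)} {U : Finset V} {u v : V}
    (hu : u ∈ U) (h : Reaches A u v) : ∃ n, v ∈ layer A U n := by
  induction h with
  | refl => exact ⟨0, hu⟩
  | tail _ harc ih =>
    obtain ⟨n, hn⟩ := ih
    refine ⟨n + 1, ?_⟩
    rw [layer]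
    exact Finset.mem_union_right _ (Finset.mem_filter.mpr ⟨Finset.mem_univ _, _, hn, harc⟩)

/-- If `U` meets every source component, every vertex is reachable from `U`. -/
lemma reachable_from_U (A : Finset (V × V)) (U : Finset V)
    (hU : ∀ K : Set V, IsSourceComponent A K → ∃ u ∈ U, u ∈ K) (v : V) :
    ∃ u ∈ U, Reaches A u v := by
  classical
  set n : V → ℕ := fun w => (Finset.univ.filter (fun x => Reaches A x w)).card with hn
  have hvS : v ∈ Finset.univ.filter (fun w => Reaches A w v) :=
    Finset.mem_filter.mpr ⟨Finset.mem_univ _, Relation.ReflTransGen.refl⟩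
  obtain ⟨w, hwS, hmin⟩ :=
    Finset.exists_min_image (Finset.univ.filter (fun w => Reaches A w v)) n ⟨v, hvS⟩
  have hwv : Reaches A w v := (Finset.mem_filter.mp hwS).2
  set K : Set V := {u | Reaches A u w ∧ Reaches A w u} with hKdef
  have hK : IsSourceComponent A K := by
    refine ⟨⟨w, rfl⟩, ?_⟩
    intro a ha hb
    have harc : Reaches A a.1 a.2 := Relation.ReflTransGen.single ha
    have h1 : Reaches A a.1 w := harc.trans hb.1
    have haS : a.1 ∈ Finset.univ.filter (fun x => Reaches A x v) :=
      Finset.mem_filter.mpr ⟨Finset.mem_univ _, h1.trans hwv⟩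
    have hle : n w ≤ n a.1 := hmin a.1 haS
    have hsub : Finset.univ.filter (fun x => Reaches A x a.1) ⊆
        Finset.univ.filter (fun x => Reaches A x w) := by
      intro x hx
      exact Finset.mem_filter.mpr ⟨Finset.mem_univ _, (Finset.mem_filter.mp hx).2.trans h1⟩
    have heq := Finset.eq_of_subset_of_card_le hsub hle
    have hwmem : w ∈ Finset.univ.filter (fun x => Reaches A x a.1) := by
      rw [heq]
      exact Finset.mem_filter.mpr ⟨Finset.mem_univ _, Relation.ReflTransGen.refl⟩
    exact ⟨h1, (Finset.mem_filter.mp hwmem).2⟩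
  obtain ⟨u, hu, huK⟩ := hU K hK
  exact ⟨u, hu, huK.1.trans hwv⟩

theorem branching_with_root_set_iff_meets_source_components
    (A : Finset (V × V)) (U : Finset V) :
    (∃ B : Finset (V × V), IsBranching A B ∧ rootSet B = U) ↔
      ∀ K : Set V, IsSourceComponent A K → ∃ u ∈ U, u ∈ K := by
  constructor
  · rintro ⟨B, ⟨hBA, _hdeg, hnc⟩, hroot⟩ K ⟨⟨v0, hKdef⟩, hsrc⟩
    have hv0 : v0 ∈ K := by
      rw [hKdef]; exact ⟨Relation.ReflTransGen.refl, Relation.ReflTransGen.refl⟩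
    by_contra hcon
    push_neg at hcon
    have hstep : ∀ v, ∃ w, v ∈ K → (w, v) ∈ B ∧ w ∈ K := by
      intro v
      by_cases hv : v ∈ K
      · have hvU : v ∉ U := fun h => hcon v h hv
        rw [← hroot] at hvU
        simp only [rootSet, Finset.mem_filter, Finset.mem_univ, true_and, not_forall,
          not_not] at hvU
        obtain ⟨a, haB, ha2⟩ := hvU
        refine ⟨a.1, fun _ => ⟨?_, ?_⟩⟩
        · rw [← ha2]; exact haB
        · exact hsrc a (hBA haB) (ha2 ▸ hv)
      · exact ⟨v, fun h => absurd h hv⟩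
    choose p hp using hstep
    set h : ℕ → V := fun k => p^[k] v0 with hdef
    have hKall : ∀ k, h k ∈ K := by
      intro k
      induction k with
      | zero => exact hv0
      | succ k ih =>
        show p^[k + 1] v0 ∈ K
        rw [Function.iterate_succ_apply']
        exact (hp _ ih).2
    have hchain : ∀ k, (h (k + 1), h k) ∈ B := by
      intro k
      show (p^[k + 1] v0, p^[k] v0) ∈ B
      rw [Function.iterate_succ_apply']
      exact (hp _ (hKall k)).1
    obtain ⟨i, j, hne, heq⟩ := Finite.exists_ne_map_eq_of_infinite h
    rcases hne.lt_or_gt with hlt | hlt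
    · exact hnc (cycle_of_backchain hchain hlt heq)
    · exact hnc (cycle_of_backchain hchain hlt heq.symm)
  · intro hU
    have hreach := reachable_from_U A U hU
    have hex : ∀ v : V, ∃ m, v ∈ layer A U m := by
      intro v
      obtain ⟨u, hu, huv⟩ := hreach v
      exact mem_layer_of_reaches hu huv
    set d : V → ℕ := fun v => Nat.find (hex v) with hd
    have key : ∀ v, ∃ u, v ∉ U → (u, v) ∈ A ∧ d u < d v := by
      intro v
      by_cases hv : v ∈ U
      · exact ⟨v, fun h => absurd hv h⟩
      · have h0 : v ∈ layer A U (d v) := Nat.find_spec (hex v)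
        have hdne : d v ≠ 0 := by
          intro hc
          rw [hc] at h0
          exact hv h0
        obtain ⟨m, hm⟩ : ∃ m, d v = m + 1 := ⟨d v - 1, by omega⟩
        rw [hm] at h0
        rw [layer] at h0
        have hnot : v ∉ layer A U m := Nat.find_min (hex v) (show m < d v by rw [hm]; exact Nat.lt_succ_self m)
        rcases Finset.mem_union.mp h0 with h1 | h1
        · exact absurd h1 hnot
        · obtain ⟨u, hu, hua⟩ := (Finset.mem_filter.mp h1).2
          refine ⟨u, fun _ => ⟨hua, ?_⟩⟩
          have : d u ≤ m := Nat.find_min' (hex u) hu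
          omega
    choose g hg using key
    refine ⟨(Finset.univ.filter (fun v => v ∉ U)).image (fun v => (g v, v)), ⟨?_, ?_, ?_⟩, ?_⟩
    · intro a ha
      obtain ⟨v, hv, rfl⟩ := Finset.mem_image.mp ha
      exact (hg v (Finset.mem_filter.mp hv).2).1
    · intro v
      refine Finset.card_le_one.mpr ?_
      intro a ha b hb
      obtain ⟨ha1, ha2⟩ := Finset.mem_filter.mp ha
      obtain ⟨hb1, hb2⟩ := Finset.mem_filter.mp hb
      obtain ⟨x, _, rfl⟩ := Finset.mem_image.mp ha1
      obtain ⟨y, _, rfl⟩ := Finset.mem_image.mp hb1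
      simp only at ha2 hb2
      rw [ha2, hb2]
    · rintro ⟨nn, f, hf⟩
      have hdlt : ∀ i : Fin (nn + 1), d (f i) < d (f (i + 1)) := by
        intro i
        obtain ⟨x, hx, hxe⟩ := Finset.mem_image.mp (hf i)
        have hx2 : x ∉ U := (Finset.mem_filter.mp hx).2
        have e1 : f i = g x := congrArg Prod.fst hxe.symm
        have e2 : f (i + 1) = x := congrArg Prod.snd hxe.symm
        rw [e1, e2]
        exact (hg x hx2).2
      open Fin.NatCast in
      have hmono : StrictMono (fun k : ℕ => d (f (k : Fin (nn + 1)))) := by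
        apply strictMono_nat_of_lt_succ
        intro k
        have : ((k + 1 : ℕ) : Fin (nn + 1)) = (k : Fin (nn + 1)) + 1 := by push_cast; ring
        rw [this]
        exact hdlt _
      open Fin.NatCast in
      have h1 : d (f ((0 : ℕ) : Fin (nn + 1))) < d (f ((nn + 1 : ℕ) : Fin (nn + 1))) :=
        hmono (Nat.succ_pos nn)
      open Fin.NatCast in
      rw [Nat.cast_zero, Fin.natCast_self] at h1
      exact lt_irrefl _ h1
    · ext v
      simp only [rootSet, Finset.mem_filter, Finset.mem_univ, true_and]
      constructor
      · intro hall
        by_contra hv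
        have : (g v, v) ∈ (Finset.univ.filter (fun v => v ∉ U)).image (fun v => (g v, v)) :=
          Finset.mem_image_of_mem _ (Finset.mem_filter.mpr ⟨Finset.mem_univ _, hv⟩)
        exact hall _ this rfl
      · intro hv a ha
        obtain ⟨x, hx, rfl⟩ := Finset.mem_image.mp ha
        have hx2 : x ∉ U := (Finset.mem_filter.mp hx).2
        intro hc
        simp only at hc
        exact hx2 (hc ▸ hv)
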